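/- Define V(x) = dist(E,P₁)/(β₁−1) on ℝ² × ℝ² (as a function of E and P₁ positions, P₁ ≠ E) and the vector field f corresponding to evader heading φ* = λ₁ at unit speed and pursuer heading ψ₁* = λ₁ at speed β₁. Then the directional derivative satisfies ∇V · f = −1, so 1 + ∇V·f = 0 (the HJI equation holds in region R₁). -/

import Mathlib

/-- along the optimal flow in region R₁ (evader heading λ₁ at unit speed,
pursuer 1 heading λ₁ at speed β₁), the Value V = dist(E,P₁)/(β₁−1) has total time
derivative ∇V·f = −1, hence 1 + ∇V·f = 0 (the HJI equation holds). -/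
theorem stmt9 (E P : EuclideanSpace ℝ (Fin 2)) (β : ℝ) (hβ : 1 < β) (hne : E ≠ P)
    (u : EuclideanSpace ℝ (Fin 2)) (hu : u = ‖E - P‖⁻¹ • (E - P)) :
    HasDerivAt (fun t : ℝ => dist (E + t • u) (P + (β * t) • u) / (β - 1)) (-1) 0
      ∧ (1 : ℝ) + (-1) = 0 := by
  refine ⟨?_, by norm_num⟩
  have hEP : E - P ≠ 0 := sub_ne_zero.2 hne
  have hr : 0 < ‖E - P‖ := norm_pos_iff.2 hEP
  set r := ‖E - P‖ with hrdef
  have hru : r • u = E - P := by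
    rw [hu, smul_smul, mul_inv_cancel₀ (ne_of_gt hr), one_smul]
  have hβ0 : 0 < β - 1 := by linarith
  have key : ∀ᶠ t : ℝ in nhds 0,
      dist (E + t • u) (P + (β * t) • u) / (β - 1)
        = (r + t * (1 - β)) / (β - 1) := by
    have hsmall : ∀ᶠ t : ℝ in nhds 0, |t| < r / (β - 1) := by
      have : (0:ℝ) < r / (β - 1) := by positivity
      filter_upwards [Metric.ball_mem_nhds (0:ℝ) this] with t ht
      simpa [Real.dist_eq] using ht
    filter_upwards [hsmall] with t ht
    have hpos : 0 < r + t * (1 - β) := by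
      have h1 : |t| * (β - 1) < r := by
        calc |t| * (β - 1) < (r / (β - 1)) * (β - 1) := by
              exact mul_lt_mul_of_pos_right ht hβ0
          _ = r := by field_simp
      have h2 : t * (β - 1) ≤ |t| * (β - 1) :=
        mul_le_mul_of_nonneg_right (le_abs_self t) (le_of_lt hβ0)
      nlinarith
    have hdiff : E + t • u - (P + (β * t) • u) = (r + t * (1 - β)) • u := by
      rw [add_smul, hru]
      module
    have hnu : ‖u‖ = 1 := by
      rw [hu, norm_smul, norm_inv, norm_norm, inv_mul_cancel₀ (ne_of_gt hr)]
    rw [dist_eq_norm, hdiff, norm_smul, hnu, mul_one, Real.norm_eq_abs,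
      abs_of_pos hpos]
  have hlin : HasDerivAt (fun t : ℝ => (r + t * (1 - β)) / (β - 1)) (-1) 0 := by
    have h := (((hasDerivAt_id (0:ℝ)).mul_const (1 - β)).const_add r).div_const (β - 1)
    rw [show (-1:ℝ) = 1 * (1 - β) / (β - 1) by rw [one_mul, eq_div_iff (ne_of_gt hβ0)]; ring]
    exact h
  exact hlin.congr_of_eventuallyEq key
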